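/- Under the multiclass setting with a single label y and tree-structured marginals μᵢⱼ(xᵢ,xⱼ,y), for any q ∈ P(μ) with q(x) > 0: q(y|x) ≥ I(x,y;μ) / (I(x,y;μ) + Σ_{ȳ≠y} min_{(i,j)∈E} μᵢⱼ(xᵢ,xⱼ,ȳ)), where I(x,y;μ) = max(0, Σᵢ(1−dᵢ)μᵢ(xᵢ,y) + Σ_{ij∈E}μᵢⱼ(xᵢ,xⱼ,y)). -/

import Mathlib

open Finset


-- Lemma 1: ordered-pair edge count equals edgeFinset card
lemma cardE_aux {n : ℕ} (G : SimpleGraph (Fin n)) [DecidableRel G.Adj] :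
    (Finset.univ.filter (fun e : Fin n × Fin n => e.1 < e.2 ∧ G.Adj e.1 e.2)).card
      = G.edgeFinset.card := by
  apply Finset.card_bij (fun (e : Fin n × Fin n) _ => s(e.1, e.2))
  · intro e he
    simp only [mem_filter] at he
    simpa [SimpleGraph.mem_edgeFinset] using he.2.2
  · intro e he e' he' h
    simp only [mem_filter] at he he'
    rw [Sym2.eq_iff] at h
    rcases h with ⟨h1, h2⟩ | ⟨h1, h2⟩
    · exact Prod.ext h1 h2
    · exfalso
      have := he.2.1
      have := he'.2.1
      omega
  · intro e he
    induction e with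
    | _ a b =>
      simp only [SimpleGraph.mem_edgeFinset, SimpleGraph.mem_edgeSet] at he
      rcases lt_or_gt_of_ne he.ne with h | h
      · exact ⟨(a, b), by simp [mem_filter, h, he], rfl⟩
      · exact ⟨(b, a), by simp [mem_filter, h, he.symm], Sym2.eq_swap⟩

-- Lemma 2: incidence count
lemma cardP_aux {n : ℕ} (G : SimpleGraph (Fin n)) [DecidableRel G.Adj] (S : Finset (Fin n)) :
    (Finset.univ.filter (fun p : Fin n × Fin n => p.1 ∈ S ∧ G.Adj p.1 p.2)).card
      = ∑ i ∈ S, G.degree i := by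
  rw [Finset.card_filter, Fintype.sum_prod_type]
  have : ∀ i : Fin n, (∑ j, if i ∈ S ∧ G.Adj i j then (1:ℕ) else 0)
      = if i ∈ S then G.degree i else 0 := by
    intro i
    by_cases hi : i ∈ S
    · simp only [hi, true_and, if_true]
      rw [SimpleGraph.degree, SimpleGraph.neighborFinset_eq_filter, Finset.card_filter]
    · simp [hi]
  simp_rw [this]
  rw [Finset.sum_ite_mem, Finset.univ_inter]

-- key: for S ≠ univ in a tree, #(induced edges) + #S ≤ ∑_{i∈S} deg i
lemma count_lt_aux {n : ℕ} (G : SimpleGraph (Fin n)) [DecidableRel G.Adj] (hG : G.IsTree)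
    (S : Finset (Fin n)) (hS : S ≠ Finset.univ) :
    ((Finset.univ.filter (fun e : Fin n × Fin n => e.1 < e.2 ∧ G.Adj e.1 e.2)).filter
        (fun e => e.1 ∈ S ∧ e.2 ∈ S)).card + S.card ≤ ∑ i ∈ S, G.degree i := by
  classical
  obtain ⟨j₀, hj₀⟩ : ∃ j, j ∉ S := by
    by_contra h; push_neg at h; exact hS (Finset.eq_univ_iff_forall.2 h)
  choose p hp hpu using fun v => hG.existsUnique_path v j₀
  set f : Fin n → Fin n := fun v => (p v).getVert 1 with hfdef
  have hnil : ∀ v ∈ S, ¬(p v).Nil := by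
    intro v hv hn
    rw [SimpleGraph.Walk.nil_iff_length_eq] at hn
    have h0 := (p v).getVert_zero
    have hl := (p v).getVert_length
    rw [hn] at hl
    rw [h0] at hl
    exact hj₀ (hl ▸ hv)
  have hadj : ∀ v ∈ S, G.Adj v (f v) := fun v hv =>
    SimpleGraph.Walk.adj_snd (hnil v hv)
  have hmem : ∀ v ∈ S, f v ∈ (p v).tail.support := by
    intro v hv
    exact SimpleGraph.Walk.start_mem_support _
  have hnotmem : ∀ v ∈ S, v ∉ (p v).tail.support := by
    intro v hv
    have h1 : (p v).support = v :: (p v).tail.support :=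
      ((p v).cons_support_tail (hnil v hv)).symm
    have h2 := (hp v).support_nodup
    rw [h1, List.nodup_cons] at h2
    exact h2.1
  have hone : ∀ a b, a ∈ S → b ∈ S → f a = b → f b ≠ a := by
    intro a b ha hb hab hba
    have ht : ((p a).tail.copy hab rfl).IsPath := by
      rw [SimpleGraph.Walk.isPath_copy]
      exact (hp a).tail
    have heq := hpu b ((p a).tail.copy hab rfl) ht
    have : a ∈ (p b).support := by
      rw [← hba]
      have h1 : (p b).support = b :: (p b).tail.support :=
        ((p b).cons_support_tail (hnil b hb)).symm
      rw [h1]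
      exact List.mem_cons_of_mem _ (hmem b hb)
    rw [← heq, SimpleGraph.Walk.support_copy] at this
    exact hnotmem a ha this
  -- sets
  set ES := ((Finset.univ.filter (fun e : Fin n × Fin n => e.1 < e.2 ∧ G.Adj e.1 e.2)).filter
      (fun e => e.1 ∈ S ∧ e.2 ∈ S)) with hES
  set P := (Finset.univ.filter (fun pr : Fin n × Fin n => pr.1 ∈ S ∧ G.Adj pr.1 pr.2)) with hP
  set A := S.image (fun i => (i, f i)) with hA
  set B := ES.image (fun e => if f e.1 = e.2 then (e.2, e.1) else (e.1, e.2)) with hB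
  have hESmem : ∀ e ∈ ES, e.1 < e.2 ∧ G.Adj e.1 e.2 ∧ e.1 ∈ S ∧ e.2 ∈ S := by
    intro e he
    simp only [hES, mem_filter] at he
    exact ⟨he.1.2.1, he.1.2.2, he.2.1, he.2.2⟩
  have hcardA : A.card = S.card := by
    rw [hA]
    apply Finset.card_image_of_injOn
    intro a _ b _ h
    exact (Prod.ext_iff.1 h).1
  have hcardB : B.card = ES.card := by
    rw [hB]
    apply Finset.card_image_of_injOn
    intro e he e' he' h
    have h1 := (hESmem e he).1
    have h2 := (hESmem e' he').1
    by_cases c1 : f e.1 = e.2 <;> by_cases c2 : f e'.1 = e'.2 <;>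
      simp only [c1, c2, if_true, if_false, Prod.ext_iff] at h
    · exact Prod.ext h.2 h.1
    · exfalso; rw [h.1] at h1; rw [← h.2] at h2; omega
    · exfalso; rw [h.1] at h1; rw [← h.2] at h2; omega
    · exact Prod.ext h.1 h.2
  have hdisj : Disjoint A B := by
    rw [Finset.disjoint_left]
    intro pr hpA hpB
    rw [hA, Finset.mem_image] at hpA
    rw [hB, Finset.mem_image] at hpB
    obtain ⟨i, hi, hieq⟩ := hpA
    obtain ⟨e, he, heeq⟩ := hpB
    obtain ⟨_, hadj', h1S, h2S⟩ := hESmem e he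
    by_cases c : f e.1 = e.2
    · rw [if_pos c] at heeq
      rw [← hieq] at heeq
      have hi1 : i = e.2 := ((Prod.ext_iff.1 heeq).1).symm
      have hi2 : f i = e.1 := ((Prod.ext_iff.1 heeq).2).symm
      rw [hi1] at hi2
      exact hone e.1 e.2 h1S h2S c hi2
    · rw [if_neg c] at heeq
      rw [← hieq] at heeq
      have hi1 : i = e.1 := ((Prod.ext_iff.1 heeq).1).symm
      have hi2 : f i = e.2 := ((Prod.ext_iff.1 heeq).2).symm
      rw [hi1] at hi2
      exact c hi2
  have hsub : A ∪ B ⊆ P := by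
    intro pr hpr
    rw [Finset.mem_union] at hpr
    rw [hP, mem_filter]
    refine ⟨Finset.mem_univ _, ?_⟩
    rcases hpr with h | h
    · rw [hA, Finset.mem_image] at h
      obtain ⟨i, hi, hieq⟩ := h
      rw [← hieq]
      exact ⟨hi, hadj i hi⟩
    · rw [hB, Finset.mem_image] at h
      obtain ⟨e, he, heeq⟩ := h
      obtain ⟨_, hadj', h1S, h2S⟩ := hESmem e he
      by_cases c : f e.1 = e.2 <;> simp only [c, if_true, if_false] at heeq <;> rw [← heeq]
      · exact ⟨h2S, hadj'.symm⟩
      · exact ⟨h1S, hadj'⟩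
  calc ES.card + S.card = (A ∪ B).card := by
        rw [Finset.card_union_of_disjoint hdisj, hcardA, hcardB, Nat.add_comm]
    _ ≤ P.card := Finset.card_le_card hsub
    _ = ∑ i ∈ S, G.degree i := cardP_aux G S
-- combined count lemma (real-valued)
lemma count_aux {n : ℕ} (G : SimpleGraph (Fin n)) [DecidableRel G.Adj] (hG : G.IsTree)
    (S : Finset (Fin n)) :
    (((Finset.univ.filter (fun e : Fin n × Fin n => e.1 < e.2 ∧ G.Adj e.1 e.2)).filter
        (fun e => e.1 ∈ S ∧ e.2 ∈ S)).card : ℝ) + S.card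
      ≤ (∑ i ∈ S, (G.degree i : ℝ)) + (if S = Finset.univ then 1 else 0) := by
  by_cases hS : S = Finset.univ
  · subst hS
    rw [if_pos rfl]
    have h1 : ((Finset.univ.filter (fun e : Fin n × Fin n => e.1 < e.2 ∧ G.Adj e.1 e.2)).filter
        (fun e => e.1 ∈ (Finset.univ : Finset (Fin n)) ∧ e.2 ∈ (Finset.univ : Finset (Fin n))))
        = Finset.univ.filter (fun e : Fin n × Fin n => e.1 < e.2 ∧ G.Adj e.1 e.2) := by
      apply Finset.filter_true_of_mem
      intro e _; exact ⟨Finset.mem_univ _, Finset.mem_univ _⟩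
    rw [h1]
    have h2 : ∑ i, G.degree i = 2 * G.edgeFinset.card := G.sum_degrees_eq_twice_card_edges
    have h3 := cardE_aux G
    have h4 := hG.card_edgeFinset
    rw [Fintype.card_fin] at h4
    have hn : (Finset.univ.filter (fun e : Fin n × Fin n => e.1 < e.2 ∧ G.Adj e.1 e.2)).card
        + (Finset.univ : Finset (Fin n)).card ≤ (∑ i, G.degree i) + 1 := by
      have h5 : (Finset.univ : Finset (Fin n)).card = n := by simp
      omega
    have hcast := (Nat.cast_le (α := ℝ)).2 hn
    push_cast at hcast
    convert hcast using 2
  · rw [if_neg hS, add_zero]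
    have h := count_lt_aux G hG S hS
    exact_mod_cast h
-- per-z indicator inequality
lemma perz_aux {n : ℕ} {X : Fin n → Type*} [∀ i, Fintype (X i)] [∀ i, DecidableEq (X i)]
    (G : SimpleGraph (Fin n)) [DecidableRel G.Adj] (hG : G.IsTree)
    (x z : ∀ i, X i) :
    (∑ i, (1 - (G.degree i : ℝ)) * (if z i = x i then 1 else 0))
      + (∑ e ∈ Finset.univ.filter (fun e : Fin n × Fin n => e.1 < e.2 ∧ G.Adj e.1 e.2),
          (if z e.1 = x e.1 ∧ z e.2 = x e.2 then (1:ℝ) else 0))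
    ≤ if z = x then 1 else 0 := by
  classical
  set S : Finset (Fin n) := Finset.univ.filter (fun i => z i = x i) with hSdef
  have hmemS : ∀ i, i ∈ S ↔ z i = x i := by intro i; simp [hSdef]
  have h1 : (∑ i, (1 - (G.degree i : ℝ)) * (if z i = x i then 1 else 0))
      = (S.card : ℝ) - ∑ i ∈ S, (G.degree i : ℝ) := by
    simp only [mul_ite, mul_one, mul_zero]
    rw [← Finset.sum_filter, ← hSdef, Finset.sum_sub_distrib, Finset.sum_const,
      nsmul_eq_mul, mul_one]
  have h2 : (∑ e ∈ Finset.univ.filter (fun e : Fin n × Fin n => e.1 < e.2 ∧ G.Adj e.1 e.2),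
          (if z e.1 = x e.1 ∧ z e.2 = x e.2 then (1:ℝ) else 0))
      = (((Finset.univ.filter (fun e : Fin n × Fin n => e.1 < e.2 ∧ G.Adj e.1 e.2)).filter
          (fun e => e.1 ∈ S ∧ e.2 ∈ S)).card : ℝ) := by
    rw [Finset.sum_boole]
    congr 2
    apply Finset.filter_congr
    intro e _
    simp [hmemS]
  have h3 : (z = x) ↔ S = Finset.univ := by
    rw [Finset.eq_univ_iff_forall, funext_iff]
    constructor
    · intro h i; exact (hmemS i).2 (h i)
    · intro h i; exact (hmemS i).1 (h i)
  rw [h1, h2, if_congr h3 rfl rfl]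
  have := count_aux G hG S
  split_ifs at this ⊢ <;> linarith

-- summation: I0 ≤ q x y
lemma sumI_aux {n : ℕ} {X : Fin n → Type*} {Y : Type*} [∀ i, Fintype (X i)] [Fintype Y]
    [∀ i, DecidableEq (X i)]
    (q : (∀ i, X i) → Y → ℝ) (hq0 : ∀ z y, 0 ≤ q z y)
    (G : SimpleGraph (Fin n)) [DecidableRel G.Adj] (hG : G.IsTree)
    (x : ∀ i, X i) (y : Y) :
    (∑ i, (1 - (G.degree i : ℝ)) * (∑ z, if z i = x i then q z y else 0))
      + (∑ e ∈ Finset.univ.filter (fun e : Fin n × Fin n => e.1 < e.2 ∧ G.Adj e.1 e.2),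
          ∑ z, if z e.1 = x e.1 ∧ z e.2 = x e.2 then q z y else 0)
    ≤ q x y := by
  classical
  have e1 : (∑ i, (1 - (G.degree i : ℝ)) * (∑ z, if z i = x i then q z y else 0))
      = ∑ z, (∑ i, (1 - (G.degree i : ℝ)) * (if z i = x i then 1 else 0)) * q z y := by
    simp only [Finset.mul_sum, Finset.sum_mul, mul_ite, ite_mul, mul_one, mul_zero,
      zero_mul, one_mul]
    exact Finset.sum_comm
  have e2 : (∑ e ∈ Finset.univ.filter (fun e : Fin n × Fin n => e.1 < e.2 ∧ G.Adj e.1 e.2),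
          ∑ z, if z e.1 = x e.1 ∧ z e.2 = x e.2 then q z y else 0)
      = ∑ z, (∑ e ∈ Finset.univ.filter (fun e : Fin n × Fin n => e.1 < e.2 ∧ G.Adj e.1 e.2),
          (if z e.1 = x e.1 ∧ z e.2 = x e.2 then (1:ℝ) else 0)) * q z y := by
    simp only [Finset.sum_mul, ite_mul, one_mul, zero_mul]
    exact Finset.sum_comm
  rw [e1, e2, ← Finset.sum_add_distrib]
  have step : ∀ z : (∀ i, X i),
      ((∑ i, (1 - (G.degree i : ℝ)) * (if z i = x i then 1 else 0)) * q z y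
        + (∑ e ∈ Finset.univ.filter (fun e : Fin n × Fin n => e.1 < e.2 ∧ G.Adj e.1 e.2),
            (if z e.1 = x e.1 ∧ z e.2 = x e.2 then (1:ℝ) else 0)) * q z y)
      ≤ (if z = x then (1:ℝ) else 0) * q z y := by
    intro z
    rw [← add_mul]
    exact mul_le_mul_of_nonneg_right (perz_aux G hG x z) (hq0 z y)
  calc _ ≤ ∑ z, (if z = x then (1:ℝ) else 0) * q z y :=
        Finset.sum_le_sum (fun z _ => step z)
    _ = q x y := by
        simp only [ite_mul, one_mul, zero_mul]
        rw [Finset.sum_ite_eq' Finset.univ x (fun z => q z y)]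
        simp
lemma frac_aux (a A Bs b T : ℝ) (ha0 : 0 ≤ a) (haA : a ≤ A) (hb : Bs ≤ b) (hBs : 0 ≤ Bs)
    (hT : T = A + Bs) (hTpos : 0 < T) : a / (a + b) ≤ A / T := by
  rcases eq_or_lt_of_le ha0 with h0 | h0
  · rw [← h0, zero_div]
    exact div_nonneg (le_trans ha0 haA) hTpos.le
  · have hb0 : 0 ≤ b := le_trans hBs hb
    have hab : 0 < a + b := by linarith
    rw [div_le_div_iff₀ hab hTpos, hT]
    nlinarith

/-- Multiclass robust conditional bound:
`q(y|x) ≥ I(x,y;μ) / (I(x,y;μ) + Σ_{ȳ≠y} min_{(i,j)∈E} μᵢⱼ(xᵢ,xⱼ,ȳ))`,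
where `μ` are the (label-joint) marginals of `q` and `I` carries the positive part. -/
theorem stmt9 {n : ℕ} {X : Fin n → Type*} {Y : Type*} [∀ i, Fintype (X i)] [Fintype Y]
    [∀ i, Nonempty (X i)] [Nonempty Y] [∀ i, DecidableEq (X i)] [DecidableEq Y]
    (q : (∀ i, X i) → Y → ℝ) (hq0 : ∀ z y, 0 ≤ q z y) (hq1 : ∑ z, ∑ y, q z y = 1)
    (G : SimpleGraph (Fin n)) [DecidableRel G.Adj] (hG : G.IsTree)
    (x : ∀ i, X i) (y : Y)
    (hne : (Finset.univ.filter (fun e : Fin n × Fin n => e.1 < e.2 ∧ G.Adj e.1 e.2)).Nonempty)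
    (hx : 0 < ∑ ybar, q x ybar) :
    (max 0 ((∑ i, (1 - (G.degree i : ℝ)) * (∑ z, if z i = x i then q z y else 0))
        + (∑ e ∈ Finset.univ.filter (fun e : Fin n × Fin n => e.1 < e.2 ∧ G.Adj e.1 e.2),
            ∑ z, if z e.1 = x e.1 ∧ z e.2 = x e.2 then q z y else 0)))
      / ((max 0 ((∑ i, (1 - (G.degree i : ℝ)) * (∑ z, if z i = x i then q z y else 0))
          + (∑ e ∈ Finset.univ.filter (fun e : Fin n × Fin n => e.1 < e.2 ∧ G.Adj e.1 e.2),
              ∑ z, if z e.1 = x e.1 ∧ z e.2 = x e.2 then q z y else 0)))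
        + ∑ ybar ∈ Finset.univ.erase y,
            (Finset.univ.filter (fun e : Fin n × Fin n => e.1 < e.2 ∧ G.Adj e.1 e.2)).inf' hne
              (fun e => ∑ z, if z e.1 = x e.1 ∧ z e.2 = x e.2 then q z ybar else 0))
    ≤ q x y / ∑ ybar, q x ybar := by
  classical
  have hinf : ∀ ybar : Y, q x ybar ≤
      (Finset.univ.filter (fun e : Fin n × Fin n => e.1 < e.2 ∧ G.Adj e.1 e.2)).inf' hne
        (fun e => ∑ z, if z e.1 = x e.1 ∧ z e.2 = x e.2 then q z ybar else 0) := by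
    intro ybar
    apply Finset.le_inf'
    intro e _
    have h1 : q x ybar
        = (fun z => if z e.1 = x e.1 ∧ z e.2 = x e.2 then q z ybar else 0) x := by
      simp
    rw [h1]
    exact Finset.single_le_sum
      (f := fun z => if z e.1 = x e.1 ∧ z e.2 = x e.2 then q z ybar else 0)
      (fun z _ => by split_ifs; exacts [hq0 z ybar, le_refl 0])
      (Finset.mem_univ x)
  exact frac_aux _ (q x y) (∑ ybar ∈ Finset.univ.erase y, q x ybar) _ _
    (le_max_left _ _)
    (max_le (hq0 x y) (sumI_aux q hq0 G hG x y))
    (Finset.sum_le_sum (fun ybar _ => hinf ybar))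
    (Finset.sum_nonneg (fun ybar _ => hq0 x ybar))
    (Finset.add_sum_erase Finset.univ (fun ybar => q x ybar) (Finset.mem_univ y)).symm
    hx
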